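/- For every real q ∈ (0,1) there exists a closed disk V ⊆ ℂ such that V is contained in the open disk {z : |z| < √(1−q)} (so in particular 1 ∉ V and f_q is defined on V), 0 ∈ V, f_q(V) = V, and the product set V·V is contained in the interior of V. -/

import Mathlib

noncomputable section

/-- The Möbius transformation `f_q(y) = 1 + q/(y-1)`. -/
def fq (q y : ℂ) : ℂ := 1 + q / (y - 1)

/-- The product set `V·V = {v·w : v, w ∈ V}`. -/
def prodSet (V : Set ℂ) : Set ℂ := {z | ∃ v ∈ V, ∃ w ∈ V, z = v * w}

/-- **Theorem.** For every real `q ∈ (0,1)` there is a closed disk `V` contained in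
the open disk of radius `√(1-q)` about `0`, with `0 ∈ V`, `f_q(V) = V`, and
`V·V` contained in the interior of `V`. -/
theorem invariant_disk_for_q_in_unit_interval (q : ℝ) (hq0 : 0 < q) (hq1 : q < 1) :
    ∃ (c : ℂ) (ρ : ℝ), 0 ≤ ρ ∧
      Metric.closedBall c ρ ⊆ Metric.ball (0 : ℂ) (Real.sqrt (1 - q)) ∧
      (0 : ℂ) ∈ Metric.closedBall c ρ ∧
      fq (q : ℂ) '' Metric.closedBall c ρ = Metric.closedBall c ρ ∧
      prodSet (Metric.closedBall c ρ) ⊆ interior (Metric.closedBall c ρ) := by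
  have h2q : (0:ℝ) < 2 - q := by linarith
  have h1q : (0:ℝ) < 1 - q := by linarith
  set c : ℝ := q*(1-q)/(2*(2-q)) with hc_def
  set ρ : ℝ := (1-q)*(4-q)/(2*(2-q)) with hρ_def
  have hc : 0 < c := by
    apply div_pos (by nlinarith) (by nlinarith)
  have hρpos : 0 < ρ := by
    apply div_pos (by nlinarith) (by nlinarith)
  have hsub : ρ - c = 1 - q := by
    rw [hc_def, hρ_def]; field_simp; ring
  have hkey : (1 - c)^2 - ρ^2 = q := by
    rw [hc_def, hρ_def]; field_simp; ring
  have hbq : (ρ + c) * (2 - q) = 2*(1-q) := by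
    rw [hc_def, hρ_def]; field_simp; ring
  have hsq : (ρ + c)^2 < 1 - q := by nlinarith [sq_nonneg q, hbq, h2q, h1q]
  have hbnn : (0:ℝ) ≤ ρ + c := by linarith
  have hb1 : ρ + c < 1 := by nlinarith [hsq]
  have hqC : (q:ℂ) ≠ 0 := by exact_mod_cast hq0.ne'
  -- key invariance step: f_q maps the closed disk into itself
  have hmem : ∀ y : ℂ, ‖y - c‖ ≤ ρ → ‖fq (q:ℂ) y - c‖ ≤ ρ := by
    intro y hy
    have hy1 : y ≠ 1 := by
      intro h
      rw [h, show (1 - (c:ℂ)) = ((1-c:ℝ):ℂ) by push_cast; ring, Complex.norm_real, Real.norm_eq_abs,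
        abs_of_pos (by linarith)] at hy
      linarith
    have hw : y - 1 ≠ 0 := sub_ne_zero.mpr hy1
    have hrepr : fq (q:ℂ) y - (c:ℂ) = (((1:ℂ)-c)*(y-1) + q)/(y-1) := by
      unfold fq; field_simp; ring
    rw [hrepr, norm_div, div_le_iff₀ (norm_pos_iff.mpr hw)]
    have hy2 : Complex.normSq (y - c) ≤ ρ^2 := by
      rw [← Complex.sq_norm]; exact pow_le_pow_left₀ (norm_nonneg _) hy 2
    have h1 : Complex.normSq (((1:ℂ)-c)*(y-1) + q) ≤ ρ^2 * Complex.normSq (y-1) := by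
      simp only [Complex.normSq_apply, Complex.add_re, Complex.add_im, Complex.mul_re,
        Complex.mul_im, Complex.sub_re, Complex.sub_im, Complex.ofReal_re, Complex.ofReal_im,
        Complex.one_re, Complex.one_im] at hy2 ⊢
      nlinarith [mul_le_mul_of_nonneg_left hy2 hq0.le, hkey, sq_nonneg (y.re - 1),
        sq_nonneg y.im, hq0, mul_pos hq0 hq0]
    calc ‖((1:ℂ)-c)*(y-1) + q‖
        = Real.sqrt (Complex.normSq (((1:ℂ)-c)*(y-1) + q)) := by rw [Complex.norm_def]
      _ ≤ Real.sqrt (ρ^2 * Complex.normSq (y-1)) := Real.sqrt_le_sqrt h1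
      _ = ρ * ‖y - 1‖ := by
          rw [Real.sqrt_mul (sq_nonneg ρ), Real.sqrt_sq hρpos.le, Complex.norm_def]
  -- points of the disk are ≠ 1
  have hne1 : ∀ z : ℂ, ‖z - c‖ ≤ ρ → z ≠ 1 := by
    intro z hz h
    rw [h, show (1 - (c:ℂ)) = ((1-c:ℝ):ℂ) by push_cast; ring, Complex.norm_real, Real.norm_eq_abs,
      abs_of_pos (by linarith)] at hz
    linarith
  -- f_q is an involution away from 1
  have hinv : ∀ y : ℂ, y ≠ 1 → fq (q:ℂ) (fq (q:ℂ) y) = y := by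
    intro y hy
    have hw : y - 1 ≠ 0 := sub_ne_zero.mpr hy
    unfold fq
    field_simp
    rw [show y - 1 + (q:ℂ) - (y - 1) = q by ring, mul_div_cancel_left₀ _ hqC]; ring
  refine ⟨(c:ℂ), ρ, hρpos.le, ?_, ?_, ?_, ?_⟩
  · -- contained in the open ball of radius √(1-q)
    intro z hz
    rw [Metric.mem_closedBall, Complex.dist_eq] at hz
    rw [Metric.mem_ball, Complex.dist_eq, sub_zero]
    have h1 : ‖z‖ ≤ ρ + c := by
      calc ‖z‖ = ‖(z - c) + (c:ℂ)‖ := by ring_nf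
        _ ≤ ‖z - c‖ + ‖(c:ℂ)‖ := norm_add_le _ _
        _ ≤ ρ + c := by rw [Complex.norm_real, Real.norm_eq_abs, abs_of_pos hc]; linarith
    have h2 : ρ + c < Real.sqrt (1 - q) := (Real.lt_sqrt hbnn).mpr hsq
    linarith
  · -- 0 is in the disk
    rw [Metric.mem_closedBall, Complex.dist_eq, zero_sub, norm_neg,
      Complex.norm_real, Real.norm_eq_abs, abs_of_pos hc]
    linarith
  · -- f_q(V) = V
    ext z
    simp only [Set.mem_image, Metric.mem_closedBall, Complex.dist_eq]
    constructor
    · rintro ⟨y, hy, rfl⟩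
      exact hmem y hy
    · intro hz
      refine ⟨fq (q:ℂ) z, hmem z hz, hinv z (hne1 z hz)⟩
  · -- product set in interior
    rintro z ⟨v, hv, w, hw, rfl⟩
    rw [Metric.mem_closedBall, Complex.dist_eq] at hv hw
    rw [interior_closedBall _ hρpos.ne', Metric.mem_ball, Complex.dist_eq]
    have habs : ∀ u : ℂ, ‖u - c‖ ≤ ρ → ‖u‖ ≤ ρ + c := by
      intro u hu
      calc ‖u‖ = ‖(u - c) + (c:ℂ)‖ := by ring_nf
        _ ≤ ‖u - c‖ + ‖(c:ℂ)‖ := norm_add_le _ _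
        _ ≤ ρ + c := by rw [Complex.norm_real, Real.norm_eq_abs, abs_of_pos hc]; linarith
    have h1 : ‖v * w‖ ≤ (ρ + c)^2 := by
      rw [norm_mul]
      calc ‖v‖ * ‖w‖ ≤ (ρ + c) * (ρ + c) :=
            mul_le_mul (habs v hv) (habs w hw) (norm_nonneg _) hbnn
        _ = (ρ + c)^2 := by ring
    calc ‖v * w - c‖ ≤ ‖v * w‖ + ‖(c:ℂ)‖ := by
          simpa [sub_eq_add_neg] using norm_add_le (v * w) (-(c:ℂ))
      _ ≤ (ρ + c)^2 + c := by rw [Complex.norm_real, Real.norm_eq_abs, abs_of_pos hc]; linarith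
      _ < ρ := by linarith [hsq, hsub]

end
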